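/- Let (Ω, 𝒜, μ) be a measure space, let φ₁, φ₂ : Ω → ℝ be integrable with respect to μ, and let f : ℝ → ℝ be concave (ConcaveOn ℝ Set.univ f). Then f(∫ (φ₁ ⊓ φ₂) dμ) + f(∫ (φ₁ ⊔ φ₂) dμ) ≤ f(∫ φ₁ dμ) + f(∫ φ₂ dμ), where φ₁ ⊓ φ₂ and φ₁ ⊔ φ₂ denote the pointwise minimum and maximum (which are again integrable). -/

import Mathlib

open MeasureTheory

lemma concave_four_point (f : ℝ → ℝ) (hf : ConcaveOn ℝ Set.univ f)
    {a b c d : ℝ} (hac : a ≤ c) (hcd : c ≤ d) (hdb : d ≤ b)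
    (hsum : a + b = c + d) : f a + f b ≤ f c + f d := by
  rcases eq_or_lt_of_le (hac.trans (hcd.trans hdb)) with h | hab
  · have hc : c = a := le_antisymm (by linarith) hac
    have hd : d = b := by linarith
    rw [hc, hd]
  · set t : ℝ := (b - c) / (b - a) with ht
    have hba : (0:ℝ) < b - a := by linarith
    have ht0 : 0 ≤ t := div_nonneg (by linarith) hba.le
    have ht1 : t ≤ 1 := by
      rw [div_le_one hba]; linarith
    have h1t : 0 ≤ 1 - t := by linarith
    have hc' : c = t * a + (1 - t) * b := by
      have h := div_mul_cancel₀ (b - c) hba.ne'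
      rw [← ht] at h; linarith
    have hd' : d = (1 - t) * a + t * b := by
      field_simp [ht]; nlinarith [hsum]
    have H1 : t • f a + (1 - t) • f b ≤ f (t • a + (1 - t) • b) :=
      hf.2 (Set.mem_univ a) (Set.mem_univ b) ht0 h1t (by ring)
    have H2 : (1 - t) • f a + t • f b ≤ f ((1 - t) • a + t • b) :=
      hf.2 (Set.mem_univ a) (Set.mem_univ b) h1t ht0 (by ring)
    simp only [smul_eq_mul] at H1 H2
    rw [hc', hd']
    nlinarith [H1, H2]

/-- If `f : ℝ → ℝ` is concave, then `φ ↦ f (∫ φ dμ)` is submodular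
(with the pointwise lattice operations) on the integrable functions. -/
theorem concave_integral_submodular
    {Ω : Type*} [MeasurableSpace Ω] (μ : Measure Ω)
    (φ₁ φ₂ : Ω → ℝ) (h₁ : Integrable φ₁ μ) (h₂ : Integrable φ₂ μ)
    (f : ℝ → ℝ) (hf : ConcaveOn ℝ Set.univ f) :
    f (∫ x, min (φ₁ x) (φ₂ x) ∂μ) + f (∫ x, max (φ₁ x) (φ₂ x) ∂μ)
      ≤ f (∫ x, φ₁ x ∂μ) + f (∫ x, φ₂ x ∂μ) := by
  have hmin : Integrable (fun x => min (φ₁ x) (φ₂ x)) μ := h₁.inf h₂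
  have hmax : Integrable (fun x => max (φ₁ x) (φ₂ x)) μ := h₁.sup h₂
  set a := ∫ x, min (φ₁ x) (φ₂ x) ∂μ
  set b := ∫ x, max (φ₁ x) (φ₂ x) ∂μ
  set c := ∫ x, φ₁ x ∂μ
  set d := ∫ x, φ₂ x ∂μ
  have hsum : a + b = c + d := by
    rw [← integral_add hmin hmax, ← integral_add h₁ h₂]
    congr 1; funext x; exact min_add_max _ _
  have hac : a ≤ c := integral_mono hmin h₁ fun x => min_le_left _ _
  have had : a ≤ d := integral_mono hmin h₂ fun x => min_le_right _ _
  have key : f a + f b ≤ f (min c d) + f (max c d) := by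
    apply concave_four_point f hf (le_min hac had) (min_le_max) _ (by rw [min_add_max]; linarith)
    rcases le_total c d with h | h
    · simp [max_eq_right h]; linarith
    · simp [max_eq_left h]; linarith
  rcases le_total c d with h | h
  · rwa [min_eq_left h, max_eq_right h] at key
  · rw [min_eq_right h, max_eq_left h] at key; linarith
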